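/- Let f(z) = ∫_0^{a} (u/Γ(1−u)) e^{−u z} du for fixed a ∈ (0, 1]. Then f(z) ∼ z^{−2} as z → ∞. -/

import Mathlib

open Real Filter intervalIntegral

noncomputable def myG : ℝ → ℝ := fun u => u * (1-u) / Real.Gamma (2-u)
noncomputable def myH : ℝ → ℝ := fun u => myG u - u

lemma myGcont : ContinuousOn myG (Set.Icc 0 1) := by
  apply continuousOn_of_forall_continuousAt
  intro u hu
  simp only [Set.mem_Icc] at hu
  have hpos : 0 < Real.Gamma (2 - u) := Real.Gamma_pos_of_pos (by linarith)
  apply ContinuousAt.div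
  · fun_prop
  · exact (Real.differentiableAt_Gamma (fun m => by
      have h0 : (0:ℝ) ≤ m := Nat.cast_nonneg m
      intro h; linarith [hu.1, hu.2, h0, h])).continuousAt.comp
      ((continuous_const.sub continuous_id).continuousAt)
  · exact hpos.ne'

lemma myHcont : ContinuousOn myH (Set.Icc 0 1) := myGcont.sub continuousOn_id

lemma myHint {c d a z : ℝ} (h0 : 0 ≤ c) (hcd : c ≤ d) (hda : d ≤ a) (ha1 : a ≤ 1) :
    IntervalIntegrable (fun u => myH u * Real.exp (-u*z)) MeasureTheory.volume c d := by
  apply ContinuousOn.intervalIntegrable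
  rw [Set.uIcc_of_le hcd]
  apply ContinuousOn.mul
  · exact myHcont.mono (fun x hx => ⟨by linarith [hx.1], by linarith [hx.2]⟩)
  · fun_prop

lemma myB (z : ℝ) (hz : z ≠ 0) (b : ℝ) :
    ∫ u in (0:ℝ)..b, u * Real.exp (-u*z) = (1 - (1+b*z)*Real.exp (-b*z))/z^2 := by
  have key : ∀ u : ℝ, HasDerivAt (fun u : ℝ => -((u*z+1) * Real.exp (-u*z))/z^2)
      (u * Real.exp (-u*z)) u := by
    intro u
    have h1 : HasDerivAt (fun u : ℝ => u*z+1) z u := by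
      simpa using ((hasDerivAt_id u).mul_const z).add_const 1
    have h2 : HasDerivAt (fun u : ℝ => Real.exp (-u*z)) (Real.exp (-u*z) * (-1*z)) u :=
      (((hasDerivAt_id u).neg).mul_const z).exp
    have := ((h1.mul h2).neg).div_const (z^2)
    refine this.congr_deriv ?_
    rw [div_eq_iff (pow_ne_zero 2 hz)]
    ring
  have hint : ∫ u in (0:ℝ)..b, u * Real.exp (-u*z)
      = (-((b*z+1) * Real.exp (-b*z))/z^2) - (-((0*z+1) * Real.exp (-0*z))/z^2) := by
    apply intervalIntegral.integral_eq_sub_of_hasDerivAt (fun u _ => key u)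
    apply Continuous.intervalIntegrable
    fun_prop
  rw [hint]
  simp
  ring

lemma myT (δ : ℝ) (hδ : 0 < δ) :
    Tendsto (fun z : ℝ => z^2 * Real.exp (-δ*z)) atTop (nhds 0) := by
  have h1 : Tendsto (fun x : ℝ => x^2 * Real.exp (-x)) atTop (nhds 0) :=
    tendsto_pow_mul_exp_neg_atTop_nhds_zero 2
  have h2 : Tendsto (fun z : ℝ => δ * z) atTop atTop :=
    Tendsto.const_mul_atTop hδ tendsto_id
  have := (h1.comp h2).const_mul (1/δ^2)
  simp only [mul_zero] at this
  convert this using 2 with z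
  simp only [Function.comp]
  field_simp

lemma myZero (a : ℝ) (ha : 0 < a) (ha1 : a ≤ 1) :
    Tendsto (fun z : ℝ => z^2 * ∫ u in (0:ℝ)..a, myH u * Real.exp (-u*z)) atTop (nhds 0) := by
  rw [NormedAddCommGroup.tendsto_nhds_zero]
  intro ε hε
  -- continuity of φ at 0
  have hφcont : ContinuousAt (fun u : ℝ => (1-u)/Real.Gamma (2-u) - 1) 0 := by
    have hpos : 0 < Real.Gamma (2 - (0:ℝ)) := Real.Gamma_pos_of_pos (by norm_num)
    apply ContinuousAt.sub _ continuousAt_const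
    apply ContinuousAt.div
    · fun_prop
    · exact (Real.differentiableAt_Gamma (fun m => by
        have h0 : (0:ℝ) ≤ m := Nat.cast_nonneg m
        intro h; norm_num at h; linarith)).continuousAt.comp
        ((continuous_const.sub continuous_id).continuousAt)
    · exact hpos.ne'
  have hφ0 : ((1-(0:ℝ))/Real.Gamma (2-(0:ℝ)) - 1) = 0 := by
    norm_num [Real.Gamma_two]
  have := Metric.continuousAt_iff.mp hφcont (ε/2) (by positivity)
  obtain ⟨δ', hδ', hball⟩ := this
  set δ := min a (δ'/2) with hδdef
  have hδ0 : 0 < δ := lt_min ha (by positivity)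
  have hδa : δ ≤ a := min_le_left _ _
  have hsmall : ∀ u ∈ Set.Icc (0:ℝ) δ, |myH u| ≤ (ε/2) * u := by
    intro u hu
    have hu0 := hu.1
    have hud := hu.2
    have h1 : |((1-u)/Real.Gamma (2-u) - 1)| ≤ ε/2 := by
      have : dist u 0 < δ' := by
        rw [Real.dist_eq, sub_zero, abs_of_nonneg hu0]
        have : δ ≤ δ'/2 := min_le_right _ _
        linarith
      have := hball this
      rw [Real.dist_eq, hφ0, sub_zero] at this
      linarith [this]
    have heq : myH u = u * ((1-u)/Real.Gamma (2-u) - 1) := by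
      have hg : Real.Gamma (2-u) ≠ 0 :=
        (Real.Gamma_pos_of_pos (by have := hδa; have := ha1; linarith : (0:ℝ) < 2 - u)).ne'
      simp only [myH, myG]
      field_simp
    rw [heq, abs_mul, abs_of_nonneg hu0]
    calc u * |((1-u)/Real.Gamma (2-u) - 1)| ≤ u * (ε/2) := by
          exact mul_le_mul_of_nonneg_left h1 hu0
      _ = (ε/2) * u := mul_comm _ _
  set C := ∫ u in δ..a, |myH u| with hC
  have hCint : IntervalIntegrable (fun u => |myH u|) MeasureTheory.volume δ a := by
    apply ContinuousOn.intervalIntegrable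
    rw [Set.uIcc_of_le hδa]
    exact (myHcont.mono (fun x hx => ⟨by linarith [hx.1, hδ0.le], by linarith [hx.2]⟩)).abs
  have hC0 : 0 ≤ C := intervalIntegral.integral_nonneg hδa (fun u _ => abs_nonneg _)
  have hev : ∀ᶠ z : ℝ in atTop, C * (z^2 * Real.exp (-δ*z)) < ε/2 :=
    ((myT δ hδ0).const_mul C).eventually_lt_const (by simpa using (by positivity : (0:ℝ) < ε/2))
  filter_upwards [eventually_gt_atTop 0, hev] with z hz hlt
  have hz2 : (0:ℝ) < z^2 := by positivity
  have J1 : IntervalIntegrable (fun u => myH u * Real.exp (-u*z)) MeasureTheory.volume 0 δ :=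
    myHint le_rfl hδ0.le hδa ha1
  have J2 : IntervalIntegrable (fun u => myH u * Real.exp (-u*z)) MeasureTheory.volume δ a :=
    myHint hδ0.le hδa le_rfl ha1
  have hsplit : (∫ u in (0:ℝ)..a, myH u * Real.exp (-u*z))
      = (∫ u in (0:ℝ)..δ, myH u * Real.exp (-u*z)) + ∫ u in δ..a, myH u * Real.exp (-u*z) :=
    (intervalIntegral.integral_add_adjacent_intervals J1 J2).symm
  -- bound I1
  have hI1 : |∫ u in (0:ℝ)..δ, myH u * Real.exp (-u*z)| ≤ (ε/2) / z^2 := by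
    calc |∫ u in (0:ℝ)..δ, myH u * Real.exp (-u*z)|
        ≤ ∫ u in (0:ℝ)..δ, |myH u * Real.exp (-u*z)| :=
          intervalIntegral.abs_integral_le_integral_abs hδ0.le
      _ ≤ ∫ u in (0:ℝ)..δ, (ε/2) * (u * Real.exp (-u*z)) := by
          apply intervalIntegral.integral_mono_on hδ0.le J1.abs
          · apply Continuous.intervalIntegrable; fun_prop
          · intro u hu
            rw [abs_mul, abs_of_nonneg (Real.exp_pos _).le, ← mul_assoc]
            exact mul_le_mul_of_nonneg_right (hsmall u hu) (Real.exp_pos _).le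
      _ = (ε/2) * ∫ u in (0:ℝ)..δ, u * Real.exp (-u*z) := intervalIntegral.integral_const_mul _ _
      _ ≤ (ε/2) * (1/z^2) := by
          apply mul_le_mul_of_nonneg_left _ (by positivity)
          rw [myB z hz.ne' δ]
          gcongr
          nlinarith [mul_pos (by nlinarith : (0:ℝ) < 1 + δ*z) (Real.exp_pos (-δ*z))]
      _ = (ε/2) / z^2 := by ring
  -- bound I2
  have hI2 : |∫ u in δ..a, myH u * Real.exp (-u*z)| ≤ C * Real.exp (-δ*z) := by
    calc |∫ u in δ..a, myH u * Real.exp (-u*z)|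
        ≤ ∫ u in δ..a, |myH u * Real.exp (-u*z)| :=
          intervalIntegral.abs_integral_le_integral_abs hδa
      _ ≤ ∫ u in δ..a, |myH u| * Real.exp (-δ*z) := by
          apply intervalIntegral.integral_mono_on hδa J2.abs (hCint.mul_const _)
          intro u hu
          rw [abs_mul, abs_of_nonneg (Real.exp_pos _).le]
          apply mul_le_mul_of_nonneg_left _ (abs_nonneg _)
          apply Real.exp_le_exp.mpr
          nlinarith [hu.1, hz]
      _ = C * Real.exp (-δ*z) := intervalIntegral.integral_mul_const _ _
  rw [hsplit]
  rw [Real.norm_eq_abs, abs_mul, abs_of_pos hz2]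
  calc z^2 * |(∫ u in (0:ℝ)..δ, myH u * Real.exp (-u*z)) + ∫ u in δ..a, myH u * Real.exp (-u*z)|
      ≤ z^2 * ((ε/2)/z^2 + C * Real.exp (-δ*z)) := by
        apply mul_le_mul_of_nonneg_left _ hz2.le
        exact (abs_add_le _ _).trans (add_le_add hI1 hI2)
    _ = ε/2 + C * (z^2 * Real.exp (-δ*z)) := by field_simp
    _ < ε/2 + ε/2 := by linarith
    _ = ε := by ring

theorem stmt_9 (a : ℝ) (ha : 0 < a) (ha1 : a ≤ 1) :
    Filter.Tendsto
      (fun z : ℝ => (∫ u in (0:ℝ)..a, (u / Real.Gamma (1 - u)) * Real.exp (-u * z)) / z ^ (-2 : ℝ))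
      Filter.atTop (nhds 1) := by
  have hcongr : ∀ z : ℝ, (∫ u in (0:ℝ)..a, (u / Real.Gamma (1-u)) * Real.exp (-u*z))
      = ∫ u in (0:ℝ)..a, myG u * Real.exp (-u*z) := by
    intro z
    apply intervalIntegral.integral_congr
    intro u hu
    rw [Set.uIcc_of_le ha.le, Set.mem_Icc] at hu
    congr 1
    by_cases h : u = 1
    · subst h; simp [myG, Real.Gamma_zero]
    · have hne : (1:ℝ) - u ≠ 0 := sub_ne_zero.mpr (fun hh => h hh.symm)
      have h2 : Real.Gamma (2-u) = (1-u) * Real.Gamma (1-u) := by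
        rw [show (2:ℝ)-u = (1-u)+1 by ring, Real.Gamma_add_one hne]
      simp only [myG]
      rw [h2, mul_comm u (1-u), mul_div_mul_left _ _ hne]
  have tend1 : Tendsto (fun z : ℝ => 1 - (1+a*z)*Real.exp (-(a*z))) atTop (nhds 1) := by
    have hb : Tendsto (fun t : ℝ => (1+t)*Real.exp (-t)) atTop (nhds 0) := by
      have e1 : Tendsto (fun t : ℝ => Real.exp (-t)) atTop (nhds 0) :=
        Real.tendsto_exp_neg_atTop_nhds_zero
      have e2 : Tendsto (fun t : ℝ => t^1 * Real.exp (-t)) atTop (nhds 0) :=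
        tendsto_pow_mul_exp_neg_atTop_nhds_zero 1
      have e3 := e1.add e2
      rw [add_zero] at e3
      apply e3.congr
      intro t; simp; ring
    have hcomp : Tendsto (fun z : ℝ => (1+a*z)*Real.exp (-(a*z))) atTop (nhds 0) :=
      hb.comp (Tendsto.const_mul_atTop ha tendsto_id)
    have := (tendsto_const_nhds (x := (1:ℝ)) (f := atTop)).sub hcomp
    rw [sub_zero] at this
    exact this
  have final := tend1.add (myZero a ha ha1)
  rw [add_zero] at final
  apply final.congr'
  filter_upwards [eventually_gt_atTop 0] with z hz
  have hIu : IntervalIntegrable (fun u => u * Real.exp (-u*z)) MeasureTheory.volume 0 a :=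
    Continuous.intervalIntegrable (by fun_prop) _ _
  have hIh : IntervalIntegrable (fun u => myH u * Real.exp (-u*z)) MeasureTheory.volume 0 a :=
    myHint le_rfl ha.le le_rfl ha1
  have hsum : (∫ u in (0:ℝ)..a, myG u * Real.exp (-u*z))
      = (∫ u in (0:ℝ)..a, u * Real.exp (-u*z)) + ∫ u in (0:ℝ)..a, myH u * Real.exp (-u*z) := by
    rw [← intervalIntegral.integral_add hIu hIh]
    apply intervalIntegral.integral_congr
    intro u _
    simp only [myH]
    ring
  rw [hcongr z, hsum, myB z hz.ne']
  rw [Real.rpow_neg hz.le]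
  rw [show z^(2:ℝ) = z^2 by rw [← Real.rpow_natCast z 2]; norm_num]
  have hz2 : z^2 ≠ 0 := by positivity
  field_simp
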